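/- Let (X,d) be a metric space, E : ℝ² → ℝ a C² convex function with 1-Lipschitz gradient, J := Id − ∇E, and f = (f₁,f₂) : X → ℝ² a bounded Lipschitz map. Then g = (g₁,g₂) := J ∘ f satisfies, at every point x ∈ X, |Dg₁|²(x) + |Dg₂|²(x) ≤ |Df₁|²(x) + |Df₂|²(x), where |Dh|(x) := limsup_{y→x} |h(y) − h(x)|/d(x,y) (set to 0 at isolated points). -/

import Mathlib

open scoped Topology Classical NNReal
open Filter

set_option maxHeartbeats 2000000

local notation "⟪" x ", " y "⟫" => @inner ℝ _ _ x y

section Helpers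
variable {n : ℕ}

lemma slopeAux_matrix_ineq (a b c s₁ s₂ : ℝ) (ha0 : 0 ≤ a) (ha1 : a ≤ 1) (hc0 : 0 ≤ c)
    (hc1 : c ≤ 1) (hb : 0 ≤ b) (h1 : b^2 ≤ a*c) (h2 : b^2 ≤ (1-a)*(1-c))
    (hs1 : 0 ≤ s₁) (hs2 : 0 ≤ s₂) :
    (a*s₁+b*s₂)^2 + (b*s₁+c*s₂)^2 ≤ s₁^2+s₂^2 := by
  have hu : 0 ≤ 1 - a := by linarith
  have hv : 0 ≤ 1 - c := by linarith
  have inner : 0 ≤ (1-a)*s₁^2 + (1-c)*s₂^2 - 2*b*s₁*s₂ := by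
    rcases eq_or_lt_of_le (add_nonneg hu hv) with h | h
    · have hb0 : b = 0 := by nlinarith
      have ha' : a = 1 := by linarith
      have hc' : c = 1 := by linarith
      simp [hb0, ha', hc']
    · have key : ((1-a)+(1-c)) * ((1-a)*s₁^2 + (1-c)*s₂^2 - 2*b*s₁*s₂)
          = ((1-a)*s₁ - b*s₂)^2 + ((1-c)*s₂ - b*s₁)^2
            + ((1-a)*(1-c) - b^2)*(s₁^2+s₂^2) := by ring
      have pos : 0 ≤ ((1-a)*s₁ - b*s₂)^2 + ((1-c)*s₂ - b*s₁)^2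
            + ((1-a)*(1-c) - b^2)*(s₁^2+s₂^2) :=
        add_nonneg (add_nonneg (sq_nonneg _) (sq_nonneg _))
          (mul_nonneg (by linarith) (by positivity))
      nlinarith [key, pos, h]
  nlinarith [mul_nonneg (add_nonneg ha0 hc0) inner, sq_nonneg s₁, sq_nonneg s₂,
    mul_nonneg (mul_nonneg hs1 hs2) hb]

lemma slopeAux_abs_le_norm (v : EuclideanSpace ℝ (Fin 2)) (i : Fin 2) : |v i| ≤ ‖v‖ := by
  rw [EuclideanSpace.norm_eq, show |v i| = Real.sqrt ((v i)^2) from (Real.sqrt_sq_eq_abs _).symm]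
  apply Real.sqrt_le_sqrt
  fin_cases i <;> simp [Fin.sum_univ_two, Real.norm_eq_abs, sq_abs] <;> positivity

lemma slopeAux_norm_le (v : EuclideanSpace ℝ (Fin 2)) : ‖v‖ ≤ |v 0| + |v 1| := by
  rw [EuclideanSpace.norm_eq, Fin.sum_univ_two]
  have h : Real.sqrt (‖v 0‖^2 + ‖v 1‖^2) ≤ Real.sqrt ((|v 0| + |v 1|)^2) := by
    apply Real.sqrt_le_sqrt
    simp only [Real.norm_eq_abs]
    nlinarith [mul_nonneg (abs_nonneg (v 0)) (abs_nonneg (v 1)), sq_abs (v 0), sq_abs (v 1)]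
  simpa [Real.sqrt_sq (by positivity : (0:ℝ) ≤ |v 0| + |v 1|)] using h

lemma slopeAux_norm_sq (v : EuclideanSpace ℝ (Fin 2)) : ‖v‖^2 = (v 0)^2 + (v 1)^2 := by
  rw [EuclideanSpace.norm_eq, Fin.sum_univ_two, Real.sq_sqrt (by positivity)]
  simp [Real.norm_eq_abs, sq_abs]

lemma slopeAux_inner_eq (u v : EuclideanSpace ℝ (Fin 2)) : ⟪u, v⟫ = u 0 * v 0 + u 1 * v 1 := by
  rw [PiLp.inner_apply, Fin.sum_univ_two]
  simp only [RCLike.inner_apply', conj_trivial]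

lemma slopeAux_euclid_sum_apply (c : Fin n → ℝ) (j : Fin n) :
    (∑ i : Fin n, c i • EuclideanSpace.single i (1:ℝ)) j = c j := by
  have h1 : (∑ i : Fin n, c i • EuclideanSpace.single i (1:ℝ)) j
      = ⟪(∑ i : Fin n, c i • EuclideanSpace.single i (1:ℝ)), EuclideanSpace.single j 1⟫ := by
    simp [EuclideanSpace.inner_single_right]
  rw [h1, sum_inner]
  simp [real_inner_smul_left, EuclideanSpace.inner_single_right, EuclideanSpace.single_apply]

lemma slopeAux_fderiv_apply_eq_inner_gradient (E : EuclideanSpace ℝ (Fin n) → ℝ)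
    (y w : EuclideanSpace ℝ (Fin n)) : fderiv ℝ E y w = ⟪gradient E y, w⟫ := by
  have : InnerProductSpace.toDual ℝ _ (gradient E y) = fderiv ℝ E y :=
    (InnerProductSpace.toDual ℝ _).apply_symm_apply (fderiv ℝ E y)
  rw [← this, InnerProductSpace.toDual_apply_apply]

lemma slopeAux_gradient_rep (E : EuclideanSpace ℝ (Fin n) → ℝ) :
    gradient E = fun y => ∑ i : Fin n,
      (fderiv ℝ E y (EuclideanSpace.single i 1)) • EuclideanSpace.single i (1:ℝ) := by
  funext y
  ext j
  rw [slopeAux_euclid_sum_apply, slopeAux_fderiv_apply_eq_inner_gradient]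
  rw [EuclideanSpace.inner_single_right]
  simp

lemma slopeAux_grad_contDiff (E : EuclideanSpace ℝ (Fin n) → ℝ) (hE : ContDiff ℝ 2 E) :
    ContDiff ℝ 1 (gradient E) := by
  rw [slopeAux_gradient_rep]
  apply ContDiff.sum
  intro i _
  exact ((hE.fderiv_right (le_refl 2)).clm_apply contDiff_const).smul contDiff_const

lemma slopeAux_line_hasDerivAt (E : EuclideanSpace ℝ (Fin n) → ℝ) (hE : ContDiff ℝ 2 E)
    (v w : EuclideanSpace ℝ (Fin n)) (t : ℝ) :
    HasDerivAt (fun s : ℝ => E (v + s • w)) ⟪gradient E (v + t • w), w⟫ t := by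
  have hdiff : DifferentiableAt ℝ E (v + t • w) := (hE.differentiable two_ne_zero) _
  have hgrad : HasFDerivAt E (InnerProductSpace.toDual ℝ _ (gradient E (v + t • w)))
      (v + t • w) := hdiff.hasGradientAt
  have hc : HasDerivAt (fun s : ℝ => v + s • w) w t := by
    simpa using ((hasDerivAt_id t).smul_const w).const_add v
  simpa [InnerProductSpace.toDual_apply_apply, Function.comp_def] using hgrad.comp_hasDerivAt t hc

lemma slopeAux_grad_mono (E : EuclideanSpace ℝ (Fin n) → ℝ) (hE : ContDiff ℝ 2 E)
    (hconv : ConvexOn ℝ Set.univ E) (u v : EuclideanSpace ℝ (Fin n)) :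
    0 ≤ ⟪gradient E u - gradient E v, u - v⟫ := by
  set w := u - v with hw
  set φ : ℝ → ℝ := fun s => E (v + s • w) with hφ
  have hder : ∀ t : ℝ, HasDerivAt φ ⟪gradient E (v + t • w), w⟫ t :=
    fun t => slopeAux_line_hasDerivAt E hE v w t
  have hconvφ : ConvexOn ℝ Set.univ φ := by
    have := hconv.comp_affineMap (AffineMap.lineMap v u)
    have heq : φ = E ∘ (AffineMap.lineMap v u) := by
      funext s
      simp [hφ, AffineMap.lineMap_apply, hw]
      congr 1
      module
    rw [heq]
    simpa using this
  have hmono := hconvφ.monotoneOn_deriv (fun y _ => (hder y).differentiableAt)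
  have h01 : deriv φ 0 ≤ deriv φ 1 :=
    hmono (Set.mem_univ 0) (Set.mem_univ 1) zero_le_one
  rw [(hder 0).deriv, (hder 1).deriv] at h01
  have h0 : v + (0:ℝ) • w = v := by simp
  have h1 : v + (1:ℝ) • w = u := by simp [hw]
  rw [h0, h1] at h01
  rw [inner_sub_left]
  linarith

lemma slopeAux_H_symm (E : EuclideanSpace ℝ (Fin n) → ℝ) (hE : ContDiff ℝ 2 E)
    (p v w : EuclideanSpace ℝ (Fin n)) :
    ⟪w, fderiv ℝ (gradient E) p v⟫ = ⟪v, fderiv ℝ (gradient E) p w⟫ := by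
  set H := fderiv ℝ (gradient E) p with hHdef
  have hH : HasFDerivAt (gradient E) H p :=
    (((slopeAux_grad_contDiff E hE).differentiable one_ne_zero) p).hasFDerivAt
  set f' : EuclideanSpace ℝ (Fin n) → (EuclideanSpace ℝ (Fin n) →L[ℝ] ℝ) := fderiv ℝ E with hf'
  have hf : ∀ y, HasFDerivAt E (f' y) y := fun y =>
    ((hE.differentiable two_ne_zero) y).hasFDerivAt
  have hx : HasFDerivAt f' (fderiv ℝ f' p) p :=
    (((hE.fderiv_right (le_refl 2)).differentiable one_ne_zero) p).hasFDerivAt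
  set f'' := fderiv ℝ f' p with hf''
  have hsymm := second_derivative_symmetric hf hx
  have key : ∀ u₀ : EuclideanSpace ℝ (Fin n), ∀ u, ⟪u₀, H u⟫ = f'' u u₀ := by
    intro u₀
    have hA : HasFDerivAt (fun y => ⟪u₀, gradient E y⟫) ((innerSL ℝ u₀).comp H) p :=
      (innerSL ℝ u₀).hasFDerivAt.comp p hH
    have hB : HasFDerivAt (fun y => ⟪u₀, gradient E y⟫)
        ((ContinuousLinearMap.apply ℝ ℝ u₀).comp f'') p := by
      have : (fun y => ⟪u₀, gradient E y⟫) = fun y => f' y u₀ := by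
        funext y
        rw [real_inner_comm, ← slopeAux_fderiv_apply_eq_inner_gradient E y u₀]
      rw [this]
      exact (ContinuousLinearMap.apply ℝ ℝ u₀).hasFDerivAt.comp p hx
    have := hA.unique hB
    intro u
    have := congrArg (fun (L : EuclideanSpace ℝ (Fin n) →L[ℝ] ℝ) => L u) this
    simpa using this
  rw [key w v, key v w]
  exact hsymm v w

lemma slopeAux_quad_bounds (E : EuclideanSpace ℝ (Fin n) → ℝ) (hE : ContDiff ℝ 2 E)
    (hconv : ConvexOn ℝ Set.univ E) (hlip : LipschitzWith 1 (gradient E))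
    (p z : EuclideanSpace ℝ (Fin n)) :
    0 ≤ ⟪z, fderiv ℝ (gradient E) p z⟫ ∧ ⟪z, fderiv ℝ (gradient E) p z⟫ ≤ ‖z‖^2 := by
  set H := fderiv ℝ (gradient E) p with hHdef
  have hH : HasFDerivAt (gradient E) H p :=
    (((slopeAux_grad_contDiff E hE).differentiable one_ne_zero) p).hasFDerivAt
  have hc : HasDerivAt (fun s : ℝ => p + s • z) z 0 := by
    simpa using ((hasDerivAt_id (0:ℝ)).smul_const z).const_add p
  have h1 : HasDerivAt (fun s : ℝ => gradient E (p + s • z)) (H z) 0 := by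
    have hH0 : HasFDerivAt (gradient E) H (p + (0:ℝ) • z) := by simpa using hH
    simpa [Function.comp_def] using hH0.comp_hasDerivAt 0 hc
  set ψ : ℝ → ℝ := fun s => ⟪z, gradient E (p + s • z)⟫ with hψ
  have h2 : HasDerivAt ψ ⟪z, H z⟫ 0 := by
    have := (innerSL ℝ z).hasFDerivAt.comp_hasDerivAt 0 h1
    simpa [hψ, Function.comp_def] using this
  have htends : Filter.Tendsto (slope ψ 0) (𝓝[>] (0:ℝ)) (𝓝 ⟪z, H z⟫) :=
    (hasDerivAt_iff_tendsto_slope.mp h2).mono_left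
      (nhdsWithin_mono 0 (fun t ht => ne_of_gt ht))
  have hmem : ∀ᶠ t in 𝓝[>] (0:ℝ), t ∈ Set.Ioi (0:ℝ) := eventually_mem_nhdsWithin
  have hdiffψ : ∀ t : ℝ, ψ t - ψ 0 = ⟪gradient E (p + t • z) - gradient E p, z⟫ := by
    intro t
    simp only [hψ, zero_smul, add_zero, inner_sub_left]
    rw [real_inner_comm z (gradient E (p + t • z)), real_inner_comm z (gradient E p)]
  constructor
  · refine ge_of_tendsto htends (hmem.mono fun t ht => ?_)
    have ht' : (0:ℝ) < t := ht
    have hmono := slopeAux_grad_mono E hE hconv (p + t • z) p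
    have heq : (p + t • z) - p = t • z := by abel
    rw [heq, real_inner_smul_right] at hmono
    have h0 : (0:ℝ) ≤ ⟪gradient E (p + t • z) - gradient E p, z⟫ :=
      le_of_not_gt fun hlt => absurd hmono (by nlinarith)
    rw [slope_def_field, sub_zero]
    apply div_nonneg _ (le_of_lt ht')
    rw [hdiffψ t]
    exact h0
  · refine le_of_tendsto htends (hmem.mono fun t ht => ?_)
    have ht' : (0:ℝ) < t := ht
    have hub : ⟪gradient E (p + t • z) - gradient E p, z⟫ ≤ t * ‖z‖^2 := by
      calc ⟪gradient E (p + t • z) - gradient E p, z⟫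
          ≤ ‖gradient E (p + t • z) - gradient E p‖ * ‖z‖ := real_inner_le_norm _ _
        _ ≤ ‖t • z‖ * ‖z‖ := by
            apply mul_le_mul_of_nonneg_right _ (norm_nonneg z)
            have := hlip.dist_le_mul (p + t • z) p
            simpa [dist_eq_norm] using this
        _ = t * ‖z‖^2 := by
            rw [norm_smul]
            simp [abs_of_pos ht', sq]
            ring
    rw [slope_def_field, sub_zero, div_le_iff₀ ht', hdiffψ t]
    calc ⟪gradient E (p + t • z) - gradient E p, z⟫ ≤ t * ‖z‖^2 := hub
      _ = ‖z‖^2 * t := by ring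

lemma slopeAux_limsup_bound {X : Type*} [MetricSpace X] {x : X} [hne : (𝓝[≠] x).NeBot]
    (u v₁ v₂ : X → ℝ) (c₁ c₂ B K₁ K₂ : ℝ) (hc₁ : 0 ≤ c₁) (hc₂ : 0 ≤ c₂)
    (hu : ∀ y, |u y - u x| / dist y x ≤ B)
    (hv₁ : ∀ y, |v₁ y - v₁ x| / dist y x ≤ K₁)
    (hv₂ : ∀ y, |v₂ y - v₂ x| / dist y x ≤ K₂)
    (key : ∀ ε > 0, ∀ᶠ y in 𝓝[≠] x,
      |u y - u x| ≤ c₁ * |v₁ y - v₁ x| + c₂ * |v₂ y - v₂ x| + ε * dist y x) :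
    limsup (fun y => |u y - u x| / dist y x) (𝓝[≠] x)
      ≤ c₁ * limsup (fun y => |v₁ y - v₁ x| / dist y x) (𝓝[≠] x)
        + c₂ * limsup (fun y => |v₂ y - v₂ x| / dist y x) (𝓝[≠] x) := by
  set l := 𝓝[≠] x
  set s₁ := limsup (fun y => |v₁ y - v₁ x| / dist y x) l with hs₁
  set s₂ := limsup (fun y => |v₂ y - v₂ x| / dist y x) l with hs₂
  apply le_of_forall_pos_le_add
  intro ε hε
  have hδpos : 0 < ε / (c₁ + c₂ + 1) := by positivity
  set δ := ε / (c₁ + c₂ + 1) with hδ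
  have h₁ : ∀ᶠ y in l, |v₁ y - v₁ x| / dist y x < s₁ + δ :=
    eventually_lt_of_limsup_lt (lt_add_of_pos_right _ hδpos)
      (Filter.isBoundedUnder_of ⟨K₁, hv₁⟩)
  have h₂ : ∀ᶠ y in l, |v₂ y - v₂ x| / dist y x < s₂ + δ :=
    eventually_lt_of_limsup_lt (lt_add_of_pos_right _ hδpos)
      (Filter.isBoundedUnder_of ⟨K₂, hv₂⟩)
  have h₃ := key δ hδpos
  have h₄ : ∀ᶠ y in l, y ≠ x := eventually_mem_nhdsWithin
  have hev : ∀ᶠ y in l, |u y - u x| / dist y x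
      ≤ c₁ * (s₁ + δ) + c₂ * (s₂ + δ) + δ := by
    filter_upwards [h₁, h₂, h₃, h₄] with y hy₁ hy₂ hy₃ hy₄
    have hd : 0 < dist y x := dist_pos.mpr hy₄
    have step1 : |u y - u x| / dist y x
        ≤ c₁ * (|v₁ y - v₁ x| / dist y x) + c₂ * (|v₂ y - v₂ x| / dist y x) + δ := by
      rw [div_le_iff₀ hd]
      calc |u y - u x| ≤ c₁ * |v₁ y - v₁ x| + c₂ * |v₂ y - v₂ x| + δ * dist y x := hy₃
        _ = (c₁ * (|v₁ y - v₁ x| / dist y x) + c₂ * (|v₂ y - v₂ x| / dist y x) + δ)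
            * dist y x := by
            rw [add_mul, add_mul, mul_assoc, mul_assoc,
              div_mul_cancel₀ _ hd.ne', div_mul_cancel₀ _ hd.ne']
    refine step1.trans ?_
    have b₁ : c₁ * (|v₁ y - v₁ x| / dist y x) ≤ c₁ * (s₁ + δ) :=
      mul_le_mul_of_nonneg_left hy₁.le hc₁
    have b₂ : c₂ * (|v₂ y - v₂ x| / dist y x) ≤ c₂ * (s₂ + δ) :=
      mul_le_mul_of_nonneg_left hy₂.le hc₂
    linarith
  have hcob : IsCoboundedUnder (· ≤ ·) l (fun y => |u y - u x| / dist y x) :=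
    Filter.isCoboundedUnder_le_of_le l (fun y => div_nonneg (abs_nonneg _) dist_nonneg)
  have := Filter.limsup_le_of_le hcob hev
  have heq : c₁ * (s₁ + δ) + c₂ * (s₂ + δ) + δ = c₁ * s₁ + c₂ * s₂ + (c₁ + c₂ + 1) * δ := by
    ring
  have hδε : (c₁ + c₂ + 1) * δ = ε := by
    rw [hδ]
    field_simp
  rw [heq, hδε] at this
  exact this

end Helpers

/-- The local (descending) slope `|Dh|(x) = limsup_{y→x} |h(y)−h(x)|/d(x,y)`,
set to `0` at isolated points. -/
noncomputable def lipSlope {X : Type*} [MetricSpace X] (h : X → ℝ) (x : X) : ℝ :=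
  if 𝓝[≠] x = ⊥ then 0
  else Filter.limsup (fun y => |h y - h x| / dist y x) (𝓝[≠] x)

/-- If `E : ℝ² → ℝ` is `C²`, convex, with `1`-Lipschitz gradient, `J = Id − ∇E`, and
`f = (f₁,f₂)` is a bounded Lipschitz map, then `g = J ∘ f` satisfies
`|Dg₁|² + |Dg₂|² ≤ |Df₁|² + |Df₂|²` at every point. -/
theorem slope_sq_sum_le_of_contraction {X : Type*} [MetricSpace X]
    (E : EuclideanSpace ℝ (Fin 2) → ℝ)
    (hE : ContDiff ℝ 2 E) (hconv : ConvexOn ℝ Set.univ E)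
    (hlip : LipschitzWith 1 (gradient E))
    (f₁ f₂ : X → ℝ) (K : ℝ≥0)
    (hf₁ : LipschitzWith K f₁) (hf₂ : LipschitzWith K f₂)
    (hb : ∃ C : ℝ, ∀ x, |f₁ x| ≤ C ∧ |f₂ x| ≤ C)
    (g₁ g₂ : X → ℝ)
    (hg₁ : ∀ x, g₁ x = EuclideanSpace.equiv (Fin 2) ℝ
        ((fun v => v - gradient E v) ((EuclideanSpace.equiv (Fin 2) ℝ).symm ![f₁ x, f₂ x])) 0)
    (hg₂ : ∀ x, g₂ x = EuclideanSpace.equiv (Fin 2) ℝ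
        ((fun v => v - gradient E v) ((EuclideanSpace.equiv (Fin 2) ℝ).symm ![f₁ x, f₂ x])) 1)
    (x : X) :
    lipSlope g₁ x ^ 2 + lipSlope g₂ x ^ 2 ≤ lipSlope f₁ x ^ 2 + lipSlope f₂ x ^ 2 := by
  by_cases hbot : 𝓝[≠] x = ⊥
  · simp [lipSlope, hbot]
  haveI hne : (𝓝[≠] x).NeBot := ⟨hbot⟩
  set l := 𝓝[≠] x with hl
  -- the vector map and its value at x
  set F : X → EuclideanSpace ℝ (Fin 2) :=
    fun y => (EuclideanSpace.equiv (Fin 2) ℝ).symm ![f₁ y, f₂ y] with hF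
  set p : EuclideanSpace ℝ (Fin 2) := F x with hp
  set H := fderiv ℝ (gradient E) p with hH
  set e₀ : EuclideanSpace ℝ (Fin 2) := EuclideanSpace.single 0 1 with he₀
  set e₁ : EuclideanSpace ℝ (Fin 2) := EuclideanSpace.single 1 1 with he₁
  set h00 := ⟪e₀, H e₀⟫ with hh00
  set h01 := ⟪e₀, H e₁⟫ with hh01
  set h11 := ⟪e₁, H e₁⟫ with hh11
  -- coordinates of F
  have hF0 : ∀ y, F y 0 = f₁ y := fun y => by simp [hF]
  have hF1 : ∀ y, F y 1 = f₂ y := fun y => by simp [hF]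
  have hg₁' : ∀ y, g₁ y = f₁ y - gradient E (F y) 0 := fun y => by
    rw [hg₁ y]; simp [hF]
  have hg₂' : ∀ y, g₂ y = f₂ y - gradient E (F y) 1 := fun y => by
    rw [hg₂ y]; simp [hF]
  -- decompose a vector
  have hdecomp : ∀ z : EuclideanSpace ℝ (Fin 2), z = z 0 • e₀ + z 1 • e₁ := by
    intro z
    ext i
    fin_cases i <;> simp [he₀, he₁, EuclideanSpace.single_apply]
  -- coordinatewise formula for H
  have hHz0 : ∀ z : EuclideanSpace ℝ (Fin 2), (H z) 0 = h00 * z 0 + h01 * z 1 := by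
    intro z
    have h1 : (H z) 0 = ⟪e₀, H z⟫ := by simp [he₀, EuclideanSpace.inner_single_left]
    rw [h1]
    conv_lhs => rw [hdecomp z]
    rw [map_add, map_smul, map_smul, inner_add_right, real_inner_smul_right,
      real_inner_smul_right]
    ring
  have hHz1 : ∀ z : EuclideanSpace ℝ (Fin 2), (H z) 1 = h01 * z 0 + h11 * z 1 := by
    intro z
    have h1 : (H z) 1 = ⟪e₁, H z⟫ := by simp [he₁, EuclideanSpace.inner_single_left]
    rw [h1]
    conv_lhs => rw [hdecomp z]
    rw [map_add, map_smul, map_smul, inner_add_right, real_inner_smul_right,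
      real_inner_smul_right]
    have hsym : ⟪e₁, H e₀⟫ = h01 := by
      rw [slopeAux_H_symm E hE p e₀ e₁]
    rw [hsym]
    ring
  -- coordinates of basis combinations
  have hcoord0 : ∀ t : ℝ, (t • e₀ + e₁ : EuclideanSpace ℝ (Fin 2)) 0 = t := by
    intro t
    simp [he₀, he₁, EuclideanSpace.single_apply]
  have hcoord1 : ∀ t : ℝ, (t • e₀ + e₁ : EuclideanSpace ℝ (Fin 2)) 1 = 1 := by
    intro t
    simp [he₀, he₁, EuclideanSpace.single_apply]
  have hinner : ∀ z : EuclideanSpace ℝ (Fin 2),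
      ⟪z, H z⟫ = z 0 * (h00 * z 0 + h01 * z 1) + z 1 * (h01 * z 0 + h11 * z 1) := by
    intro z
    rw [slopeAux_inner_eq, hHz0 z, hHz1 z]
  -- quadratic form bounds
  have hquad : ∀ t : ℝ, 0 ≤ h00*t^2 + 2*h01*t + h11 ∧ h00*t^2 + 2*h01*t + h11 ≤ t^2 + 1 := by
    intro t
    have hq := slopeAux_quad_bounds E hE hconv hlip p (t • e₀ + e₁)
    rw [hinner, hcoord0 t, hcoord1 t, slopeAux_norm_sq, hcoord0 t, hcoord1 t] at hq
    constructor
    · have := hq.1; nlinarith [this]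
    · have := hq.2; nlinarith [this]
  have he₀c : e₀ 0 = 1 ∧ e₀ 1 = 0 := by
    constructor <;> simp [he₀, EuclideanSpace.single_apply]
  have he₁c : e₁ 0 = 0 ∧ e₁ 1 = 1 := by
    constructor <;> simp [he₁, EuclideanSpace.single_apply]
  have h00b : 0 ≤ h00 ∧ h00 ≤ 1 := by
    have hq := slopeAux_quad_bounds E hE hconv hlip p e₀
    rw [hinner, slopeAux_norm_sq, he₀c.1, he₀c.2] at hq
    constructor
    · have := hq.1; nlinarith [this]
    · have := hq.2; nlinarith [this]
  have h11b : 0 ≤ h11 ∧ h11 ≤ 1 := by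
    have hq := slopeAux_quad_bounds E hE hconv hlip p e₁
    rw [hinner, slopeAux_norm_sq, he₁c.1, he₁c.2] at hq
    constructor
    · have := hq.1; nlinarith [this]
    · have := hq.2; nlinarith [this]
  -- discriminant conditions
  have hdisc1 : h01^2 ≤ h00 * h11 := by
    have := discrim_le_zero (a := h00) (b := 2*h01) (c := h11)
      (fun t => by nlinarith [(hquad t).1])
    rw [discrim] at this
    nlinarith
  have hdisc2 : h01^2 ≤ (1 - h00) * (1 - h11) := by
    have := discrim_le_zero (a := 1-h00) (b := -(2*h01)) (c := 1-h11)
      (fun t => by nlinarith [(hquad t).2])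
    rw [discrim] at this
    nlinarith
  -- bounds on difference quotients
  have hq₁ : ∀ y, |f₁ y - f₁ x| / dist y x ≤ (K:ℝ) := by
    intro y
    rcases eq_or_lt_of_le (dist_nonneg (x := y) (y := x)) with hd | hd
    · rw [← hd, div_zero]; exact K.2
    · rw [div_le_iff₀ hd]
      have := hf₁.dist_le_mul y x
      rwa [Real.dist_eq] at this
  have hq₂ : ∀ y, |f₂ y - f₂ x| / dist y x ≤ (K:ℝ) := by
    intro y
    rcases eq_or_lt_of_le (dist_nonneg (x := y) (y := x)) with hd | hd
    · rw [← hd, div_zero]; exact K.2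
    · rw [div_le_iff₀ hd]
      have := hf₂.dist_le_mul y x
      rwa [Real.dist_eq] at this
  -- norm of F y - p controlled by the two increments
  have hFsub0 : ∀ y, (F y - p) 0 = f₁ y - f₁ x := by
    intro y
    have : (F y - p) 0 = F y 0 - p 0 := rfl
    rw [this, hF0, hp, hF0]
  have hFsub1 : ∀ y, (F y - p) 1 = f₂ y - f₂ x := by
    intro y
    have : (F y - p) 1 = F y 1 - p 1 := rfl
    rw [this, hF1, hp, hF1]
  have hFnorm : ∀ y, ‖F y - p‖ ≤ |f₁ y - f₁ x| + |f₂ y - f₂ x| := by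
    intro y
    have := slopeAux_norm_le (F y - p)
    rwa [hFsub0, hFsub1] at this
  have hFdist : ∀ y, ‖F y - p‖ ≤ 2 * (K:ℝ) * dist y x := by
    intro y
    refine (hFnorm y).trans ?_
    have h1 : |f₁ y - f₁ x| ≤ (K:ℝ) * dist y x := by
      have := hf₁.dist_le_mul y x; rwa [Real.dist_eq] at this
    have h2 : |f₂ y - f₂ x| ≤ (K:ℝ) * dist y x := by
      have := hf₂.dist_le_mul y x; rwa [Real.dist_eq] at this
    linarith
  -- bounds for g quotients
  have hgbound : ∀ (g : X → ℝ) (i : Fin 2) (f : X → ℝ),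
      (∀ y, g y = f y - gradient E (F y) i) → (∀ y, |f y - f x| / dist y x ≤ (K:ℝ)) →
      ∀ y, |g y - g x| / dist y x ≤ 3 * (K:ℝ) := by
    intro g i f hgf hfb y
    rcases eq_or_lt_of_le (dist_nonneg (x := y) (y := x)) with hd | hd
    · rw [← hd, div_zero]; positivity
    · rw [div_le_iff₀ hd]
      have heq : g y - g x = (f y - f x) - ((gradient E (F y)) i - (gradient E p) i) := by
        rw [hgf y, hgf x, ← hp]; ring
      have hGd : |(gradient E (F y)) i - (gradient E p) i| ≤ 2 * (K:ℝ) * dist y x := by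
        have h1 : |(gradient E (F y)) i - (gradient E p) i|
            = |(gradient E (F y) - gradient E p) i| := by
          congr 1
        rw [h1]
        refine (slopeAux_abs_le_norm _ i).trans ?_
        have := hlip.dist_le_mul (F y) p
        rw [NNReal.coe_one, one_mul, dist_eq_norm, dist_eq_norm] at this
        calc ‖gradient E (F y) - gradient E p‖ ≤ ‖F y - p‖ := this
          _ ≤ 2 * (K:ℝ) * dist y x := hFdist y
      have hfd : |f y - f x| ≤ (K:ℝ) * dist y x := by
        have := hfb y
        rw [div_le_iff₀ hd] at this
        exact this
      calc |g y - g x| ≤ |f y - f x| + |(gradient E (F y)) i - (gradient E p) i| := by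
            rw [heq]; exact abs_sub _ _
        _ ≤ (K:ℝ) * dist y x + 2 * (K:ℝ) * dist y x := add_le_add hfd hGd
        _ = 3 * (K:ℝ) * dist y x := by ring
  -- Taylor key estimates
  have hHderiv : HasFDerivAt (gradient E) H p :=
    (((slopeAux_grad_contDiff E hE).differentiable one_ne_zero) p).hasFDerivAt
  have hFtendsto : Tendsto F l (𝓝 p) := by
    have hFcont : Continuous F := by
      apply Continuous.comp (ContinuousLinearEquiv.continuous _)
      apply continuous_pi
      intro i
      fin_cases i
      · simpa using hf₁.continuous
      · simpa using hf₂.continuous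
    exact (hFcont.continuousAt.tendsto).mono_left nhdsWithin_le_nhds
  have keygen : ∀ ε > 0, ∀ᶠ y in l,
      ‖gradient E (F y) - gradient E p - H (F y - p)‖ ≤ ε * dist y x := by
    intro ε hε
    have hε' : 0 < ε / (2 * (K:ℝ) + 1) := by positivity
    have hlo := (hasFDerivAt_iff_isLittleO_nhds_zero.mp hHderiv)
    have hlo2 := hHderiv.isLittleO
    have hev := (Asymptotics.isLittleO_iff.mp hlo2) hε'
    have hev2 := hFtendsto.eventually hev
    filter_upwards [hev2] with y hy
    calc ‖gradient E (F y) - gradient E p - H (F y - p)‖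
        ≤ ε / (2 * (K:ℝ) + 1) * ‖F y - p‖ := hy
      _ ≤ ε / (2 * (K:ℝ) + 1) * (2 * (K:ℝ) * dist y x) := by
          apply mul_le_mul_of_nonneg_left (hFdist y) (le_of_lt hε')
      _ ≤ ε * dist y x := by
          rw [div_mul_eq_mul_div, div_le_iff₀ (by positivity)]
          nlinarith [mul_nonneg hε.le (dist_nonneg (x := y) (y := x))]
  -- key estimate for g₁
  have key₁ : ∀ ε > 0, ∀ᶠ y in l, |g₁ y - g₁ x|
      ≤ |1-h00| * |f₁ y - f₁ x| + |h01| * |f₂ y - f₂ x| + ε * dist y x := by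
    intro ε hε
    filter_upwards [keygen ε hε] with y hy
    set r := gradient E (F y) - gradient E p - H (F y - p) with hr
    have hr0 : |r 0| ≤ ‖r‖ := slopeAux_abs_le_norm r 0
    have hHF : (H (F y - p)) 0 = h00 * (f₁ y - f₁ x) + h01 * (f₂ y - f₂ x) := by
      rw [hHz0 (F y - p), hFsub0 y, hFsub1 y]
    have hrc : r 0 = gradient E (F y) 0 - gradient E p 0 - (H (F y - p)) 0 := rfl
    have heq : g₁ y - g₁ x
        = (1-h00)*(f₁ y - f₁ x) - h01*(f₂ y - f₂ x) - r 0 := by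
      rw [hg₁' y, hg₁' x, ← hp, hrc, hHF]; ring
    have habs : |g₁ y - g₁ x| ≤ |1-h00| * |f₁ y - f₁ x| + |h01| * |f₂ y - f₂ x| + |r 0| := by
      rw [heq]
      calc |(1-h00)*(f₁ y - f₁ x) - h01*(f₂ y - f₂ x) - r 0|
          ≤ |(1-h00)*(f₁ y - f₁ x) - h01*(f₂ y - f₂ x)| + |r 0| := abs_sub _ _
        _ ≤ |(1-h00)*(f₁ y - f₁ x)| + |h01*(f₂ y - f₂ x)| + |r 0| := by
            have := abs_sub ((1-h00)*(f₁ y - f₁ x)) (h01*(f₂ y - f₂ x))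
            linarith
        _ = |1-h00| * |f₁ y - f₁ x| + |h01| * |f₂ y - f₂ x| + |r 0| := by
            rw [abs_mul, abs_mul]
    refine habs.trans ?_
    have : |r 0| ≤ ε * dist y x := hr0.trans hy
    linarith
  -- key estimate for g₂
  have key₂ : ∀ ε > 0, ∀ᶠ y in l, |g₂ y - g₂ x|
      ≤ |h01| * |f₁ y - f₁ x| + |1-h11| * |f₂ y - f₂ x| + ε * dist y x := by
    intro ε hε
    filter_upwards [keygen ε hε] with y hy
    set r := gradient E (F y) - gradient E p - H (F y - p) with hr
    have hr1 : |r 1| ≤ ‖r‖ := slopeAux_abs_le_norm r 1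
    have hHF : (H (F y - p)) 1 = h01 * (f₁ y - f₁ x) + h11 * (f₂ y - f₂ x) := by
      rw [hHz1 (F y - p), hFsub0 y, hFsub1 y]
    have hrc : r 1 = gradient E (F y) 1 - gradient E p 1 - (H (F y - p)) 1 := rfl
    have heq : g₂ y - g₂ x
        = (1-h11)*(f₂ y - f₂ x) - h01*(f₁ y - f₁ x) - r 1 := by
      rw [hg₂' y, hg₂' x, ← hp, hrc, hHF]; ring
    have habs : |g₂ y - g₂ x| ≤ |h01| * |f₁ y - f₁ x| + |1-h11| * |f₂ y - f₂ x| + |r 1| := by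
      rw [heq]
      calc |(1-h11)*(f₂ y - f₂ x) - h01*(f₁ y - f₁ x) - r 1|
          ≤ |(1-h11)*(f₂ y - f₂ x) - h01*(f₁ y - f₁ x)| + |r 1| := abs_sub _ _
        _ ≤ |(1-h11)*(f₂ y - f₂ x)| + |h01*(f₁ y - f₁ x)| + |r 1| := by
            have := abs_sub ((1-h11)*(f₂ y - f₂ x)) (h01*(f₁ y - f₁ x))
            linarith
        _ = |h01| * |f₁ y - f₁ x| + |1-h11| * |f₂ y - f₂ x| + |r 1| := by
            rw [abs_mul, abs_mul]; ring
    refine habs.trans ?_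
    have : |r 1| ≤ ε * dist y x := hr1.trans hy
    linarith
  -- limsup bounds
  have t₁le := slopeAux_limsup_bound g₁ f₁ f₂ (|1-h00|) (|h01|) (3*(K:ℝ)) (K:ℝ) (K:ℝ)
    (abs_nonneg _) (abs_nonneg _) (hgbound g₁ 0 f₁ hg₁' hq₁) hq₁ hq₂ key₁
  have t₂le := slopeAux_limsup_bound g₂ f₁ f₂ (|h01|) (|1-h11|) (3*(K:ℝ)) (K:ℝ) (K:ℝ)
    (abs_nonneg _) (abs_nonneg _) (hgbound g₂ 1 f₂ hg₂' hq₂) hq₁ hq₂ key₂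
  -- nonnegativity of the limsups
  have hnn : ∀ u : X → ℝ, ∀ B : ℝ, (∀ y, |u y - u x| / dist y x ≤ B) →
      0 ≤ limsup (fun y => |u y - u x| / dist y x) l := by
    intro u B hB
    exact le_limsup_of_frequently_le
      (Frequently.of_forall fun y => div_nonneg (abs_nonneg _) dist_nonneg)
      (Filter.isBoundedUnder_of ⟨B, hB⟩)
  have hs₁0 := hnn f₁ (K:ℝ) hq₁
  have hs₂0 := hnn f₂ (K:ℝ) hq₂
  have ht₁0 := hnn g₁ (3*(K:ℝ)) (hgbound g₁ 0 f₁ hg₁' hq₁)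
  have ht₂0 := hnn g₂ (3*(K:ℝ)) (hgbound g₂ 1 f₂ hg₂' hq₂)
  -- unfold lipSlope
  simp only [lipSlope, ← hl, if_neg hbot]
  set s₁ := limsup (fun y => |f₁ y - f₁ x| / dist y x) l with hs₁d
  set s₂ := limsup (fun y => |f₂ y - f₂ x| / dist y x) l with hs₂d
  set t₁ := limsup (fun y => |g₁ y - g₁ x| / dist y x) l with ht₁d
  set t₂ := limsup (fun y => |g₂ y - g₂ x| / dist y x) l with ht₂d
  have habs1 : |1-h00| = 1-h00 := abs_of_nonneg (by linarith [h00b.2])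
  have habs2 : |1-h11| = 1-h11 := abs_of_nonneg (by linarith [h11b.2])
  rw [habs1] at t₁le
  rw [habs2] at t₂le
  have hfin := slopeAux_matrix_ineq (1-h00) (|h01|) (1-h11) s₁ s₂
    (by linarith [h00b.2]) (by linarith [h00b.1]) (by linarith [h11b.2]) (by linarith [h11b.1])
    (abs_nonneg _) (by rw [sq_abs]; exact hdisc2) (by rw [sq_abs]; linarith [hdisc1]) hs₁0 hs₂0
  have hb1 : t₁^2 ≤ ((1-h00) * s₁ + |h01| * s₂)^2 := by
    apply pow_le_pow_left₀ ht₁0 t₁le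
  have hb2 : t₂^2 ≤ (|h01| * s₁ + (1-h11) * s₂)^2 := by
    apply pow_le_pow_left₀ ht₂0 t₂le
  linarith
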